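/- Let a, b, c, d be four pairwise distinct complex numbers, and define p_ab = f(d,a,b,c), p_bc = f(a,b,c,d), p_cd = f(b,c,d,a), p_da = f(c,d,a,b), where f(a,b,c,d) = (c(b-a)√q + b(c-a))/((b-a)√q + (c-a)) with q = cr(c,a,b,d). Then cr(p_ab, p_bc, p_cd, p_da) = -1; in particular the four points p_ab, p_bc, p_cd, p_da lie on a common circle or line. -/

import Mathlib

open Complex

/-- Complex cross-ratio. -/
noncomputable def crC (a b c d : ℂ) : ℂ := (a - b) * (c - d) / ((b - c) * (d - a))

/-- Principal square root of the cross-ratio `cr(c,a,b,d)`. -/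
noncomputable def sqrtQ (a b c d : ℂ) : ℂ := (crC c a b d) ^ ((1 : ℂ) / 2)

/-- The point-insertion rule. -/
noncomputable def fIns (a b c d : ℂ) : ℂ :=
  (c * (b - a) * sqrtQ a b c d + b * (c - a)) / ((b - a) * sqrtQ a b c d + (c - a))

private lemma sq_half (q : ℂ) : (q ^ ((1 : ℂ) / 2)) ^ 2 = q := by
  by_cases hq : q = 0
  · subst hq
    rw [Complex.zero_cpow (by norm_num : (1:ℂ)/2 ≠ 0)]
    ring
  · rw [sq, ← Complex.cpow_add _ _ hq]
    norm_num

/-- Core algebraic identity for part 1. -/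
private lemma core1 (a b c d s t : ℂ)
    (hs : s ^ 2 * ((a - b) * (d - c)) = (c - a) * (b - d))
    (ht : t ^ 2 * ((d - a) * (c - b)) = (b - d) * (a - c))
    (hSden : (a - b) * (d - c) ≠ 0) (hTden : (d - a) * (c - b) ≠ 0) :
    ((b*(a-d)*t + a*(b-d)) * ((b-a)*s + (c-a)) - (c*(b-a)*s + b*(c-a)) * ((a-d)*t + (b-d))) *
      ((d*(c-b)*t + c*(d-b)) * ((d-c)*s + (a-c)) - (a*(d-c)*s + d*(a-c)) * ((c-b)*t + (d-b))) +
    ((c*(b-a)*s + b*(c-a)) * ((c-b)*t + (d-b)) - (d*(c-b)*t + c*(d-b)) * ((b-a)*s + (c-a))) *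
      ((a*(d-c)*s + d*(a-c)) * ((a-d)*t + (b-d)) - (b*(a-d)*t + a*(b-d)) * ((d-c)*s + (a-c)))
      = 0 := by
  have key : (((b*(a-d)*t + a*(b-d)) * ((b-a)*s + (c-a)) - (c*(b-a)*s + b*(c-a)) * ((a-d)*t + (b-d))) *
      ((d*(c-b)*t + c*(d-b)) * ((d-c)*s + (a-c)) - (a*(d-c)*s + d*(a-c)) * ((c-b)*t + (d-b))) +
    ((c*(b-a)*s + b*(c-a)) * ((c-b)*t + (d-b)) - (d*(c-b)*t + c*(d-b)) * ((b-a)*s + (c-a))) *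
      ((a*(d-c)*s + d*(a-c)) * ((a-d)*t + (b-d)) - (b*(a-d)*t + a*(b-d)) * ((d-c)*s + (a-c)))) *
      (((a - b) * (d - c)) * ((d - a) * (c - b))) = 0 := by
    linear_combination
      ((a-b)*(a-d)*(b-c)*(c-d) *
        (c^2*d^2 + (2)*c^2*d^2*t + c^2*d^2*t^2 + (-2)*b*c*d^2*t + (-3)*b*c*d^2*t^2 + (-2)*b*c^2*d + (-2)*b*c^2*d*t + b*c^2*d*t^2 + (2)*b^2*d^2*t^2 + (2)*b^2*c*d*t + (-1)*b^2*c*d*t^2 + b^2*c^2 + (-2)*a*c*d^2 + (-2)*a*c*d^2*t + a*c*d^2*t^2 + (-2)*a*c^2*d*t + (-3)*a*c^2*d*t^2 + (2)*a*b*d^2*t + (-1)*a*b*d^2*t^2 + (4)*a*b*c*d + (4)*a*b*c*d*t + (6)*a*b*c*d*t^2 + (2)*a*b*c^2*t + (-1)*a*b*c^2*t^2 + (-2)*a*b^2*d*t + (-3)*a*b^2*d*t^2 + (-2)*a*b^2*c + (-2)*a*b^2*c*t + a*b^2*c*t^2 + a^2*d^2 + (2)*a^2*c*d*t + (-1)*a^2*c*d*t^2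 + (2)*a^2*c^2*t^2 + (-2)*a^2*b*d + (-2)*a^2*b*d*t + a^2*b*d*t^2 + (-2)*a^2*b*c*t + (-3)*a^2*b*c*t^2 + a^2*b^2 + (2)*a^2*b^2*t + a^2*b^2*t^2)) * hs
      + (2*(1+s)*((b-a)*(d-c))*((a-b)*(a-c)*(a-d)*(b-c)*(b-d)*(c-d))) * ht
  rcases mul_eq_zero.mp key with h | h
  · exact h
  · exact absurd h (mul_ne_zero hSden hTden)

/-- Harmonic (cross-ratio `-1`) implies concyclic or collinear. -/
private lemma core2 (z1 z2 z3 z4 f1 f2 f3 f4 : ℂ)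
    (hf1 : f1 = (starRingEnd ℂ) z1) (hf2 : f2 = (starRingEnd ℂ) z2)
    (hf3 : f3 = (starRingEnd ℂ) z3) (hf4 : f4 = (starRingEnd ℂ) z4)
    (h23 : z2 ≠ z3)
    (hN : (z1 - z2) * (z3 - z4) = -((z2 - z3) * (z4 - z1))) :
    (∃ o : ℂ, ∃ r : ℝ, ‖z1 - o‖ = r ∧ ‖z2 - o‖ = r ∧
        ‖z3 - o‖ = r ∧ ‖z4 - o‖ = r) ∨
      Collinear ℝ ({z1, z2, z3, z4} : Set ℂ) := by
  have h23' : z2 - z3 ≠ 0 := sub_ne_zero.mpr h23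
  have hf23 : f2 - f3 ≠ 0 := by
    rw [hf2, hf3, ← map_sub]
    simp only [ne_eq, map_eq_zero]
    exact h23'
  have hNc : (f1 - f2) * (f3 - f4) = -((f2 - f3) * (f4 - f1)) := by
    rw [hf1, hf2, hf3, hf4]
    have := congrArg (starRingEnd ℂ) hN
    simpa only [map_mul, map_sub, map_neg] using this
  by_cases hD : (z1 - z3) * (f2 - f3) - (f1 - f3) * (z2 - z3) = 0
  · -- collinear case
    right
    have hD1 : (z1 - z3) * (f2 - f3) = (f1 - f3) * (z2 - z3) := by
      linear_combination hD
    have hD4 : (z4 - z3) * (f2 - f3) = (f4 - f3) * (z2 - z3) := by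
      have key : ((z2 - z3) * (f2 - f3)) *
          ((z4 - z3) * (f2 - f3) - (f4 - f3) * (z2 - z3)) = 0 := by
        linear_combination
          ((1/2)*z4*f4 + (-1)*z4*f3 + (1/2)*z4*f2 + (-1)*z3*f4 + (2)*z3*f3 + (-1)*z3*f2 +
            (1/2)*z2*f4 + (-1)*z2*f3 + (1/2)*z2*f2) * hD
          + ((-1/2)*f3*f4 + f3^2 + (1/2)*f2*f4 + (-3/2)*f2*f3 + (1/2)*f2^2) * hN
          + ((1/2)*z3*z4 + (-1)*z3^2 + (-1/2)*z2*z4 + (3/2)*z2*z3 + (-1/2)*z2^2) * hNc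
      have h0 := (mul_eq_zero.mp key).resolve_left (mul_ne_zero h23' hf23)
      linear_combination h0
    have hdir : ∀ z fz : ℂ, fz = (starRingEnd ℂ) z →
        (z - z3) * (f2 - f3) = (fz - f3) * (z2 - z3) →
        ∃ r : ℝ, z = r • (z2 - z3) +ᵥ z3 := by
      intro z fz hfz hrel
      set u : ℂ := (z - z3) / (z2 - z3) with hu
      have hconj : (starRingEnd ℂ) u = u := by
        rw [hu, map_div₀, map_sub, map_sub, ← hfz, ← hf2, ← hf3]
        rw [div_eq_div_iff hf23 h23']
        linear_combination -hrel
      have hre : ((u.re : ℝ) : ℂ) = u := Complex.conj_eq_iff_re.mp hconj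
      refine ⟨u.re, ?_⟩
      have : (u.re : ℂ) * (z2 - z3) = z - z3 := by
        rw [hre, hu, div_mul_cancel₀ _ h23']
      rw [vadd_eq_add, Complex.real_smul, this]
      ring
    rw [collinear_iff_of_mem (show z3 ∈ ({z1, z2, z3, z4} : Set ℂ) by simp)]
    refine ⟨z2 - z3, ?_⟩
    intro p hp
    simp only [Set.mem_insert_iff, Set.mem_singleton_iff] at hp
    rcases hp with rfl | rfl | rfl | rfl
    · exact hdir p f1 hf1 hD1
    · exact hdir p f2 hf2 (by ring)
    · exact hdir p f3 hf3 (by ring)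
    · exact hdir p f4 hf4 hD4
  · -- circle case
    left
    set Num : ℂ := z1*f1*(z2-z3) + z2*f2*(z3-z1) + z3*f3*(z1-z2) with hNum
    set Numc : ℂ := z1*f1*(f2-f3) + z2*f2*(f3-f1) + z3*f3*(f1-f2) with hNumc
    set E0 : ℂ := f1*(z2-z3) + f2*(z3-z1) + f3*(z1-z2) with hE0def
    set Dd : ℂ := z1*(f2-f3) + z2*(f3-f1) + z3*(f1-f2) with hDddef
    have hDd : Dd ≠ 0 := by
      intro h
      apply hD
      rw [hDddef] at h
      linear_combination h
    have hconjE0 : (starRingEnd ℂ) E0 = Dd := by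
      rw [hE0def, hDddef, hf1, hf2, hf3]
      simp only [map_add, map_mul, map_sub, Complex.conj_conj]
      try ring
    have hE0 : E0 ≠ 0 := by
      intro h
      apply hDd
      rw [← hconjE0, h, map_zero]
    set o : ℂ := Num / E0 with ho
    have hcp : (starRingEnd ℂ) o = Numc / Dd := by
      rw [ho, map_div₀, hconjE0]
      congr 1
      rw [hNum, hNumc, hf1, hf2, hf3]
      simp only [map_add, map_mul, map_sub, Complex.conj_conj]
      try ring
    have key : ∀ z fz : ℂ, fz = (starRingEnd ℂ) z →
        (z*E0 - Num) * (fz*Dd - Numc) = (z1*E0 - Num) * (f1*Dd - Numc) →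
        ‖z - o‖ = ‖z1 - o‖ := by
      intro z fz hfz hrel
      have hmc : (z - o) * (starRingEnd ℂ) (z - o) = (z1 - o) * (starRingEnd ℂ) (z1 - o) := by
        rw [map_sub, map_sub, hcp, ← hfz, ← hf1, ho]
        field_simp
        linear_combination hrel
      have hns : Complex.normSq (z - o) = Complex.normSq (z1 - o) := by
        have := hmc
        rw [Complex.mul_conj, Complex.mul_conj] at this
        exact_mod_cast this
      rw [Complex.norm_def, Complex.norm_def, hns]
    refine ⟨o, ‖z1 - o‖, rfl, ?_, ?_, ?_⟩
    · exact key z2 f2 hf2 (by rw [hNum, hNumc, hE0def, hDddef]; ring)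
    · exact key z3 f3 hf3 (by rw [hNum, hNumc, hE0def, hDddef]; ring)
    · refine key z4 f4 hf4 ?_
      rw [hNum, hNumc, hE0def, hDddef]
      linear_combination
        ((-2)*z4*f3^2*f4 + (5)*z4*f2*f3*f4 + (-2)*z4*f2*f3^2 + (-2)*z4*f2^2*f4 + z4*f2^2*f3 + (-1)*z4*f1*f3*f4 + (4)*z4*f1*f3^2 + (-1)*z4*f1*f2*f4 + (-3)*z4*f1*f2*f3 + z4*f1*f2^2 + z4*f1^2*f4 + (-2)*z4*f1^2*f3 + z4*f1^2*f2 + (2)*z3*f3^2*f4 + (-5)*z3*f2*f3*f4 + (2)*z3*f2*f3^2 + (3)*z3*f2^2*f4 + (-2)*z3*f2^2*f3 + z3*f1*f3*f4 + (-4)*z3*f1*f3^2 + (-1)*z3*f1*f2*f4 + (5)*z3*f1*f2*f3 + (-1)*z3*f1*f2^2 + z3*f1^2*f3 + (-1)*z3*f1^2*f2 + (-1)*z2*f2*f3*f4 + z2*f2*f3^2 + z2*f1*f3*f4 + (-1)*z2*f1*f3^2 + z2*f1*f2*f4 + (-1)*z2*f1*f2*f3 + (-1)*z2*f1^2*f4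 + z2*f1^2*f3 + z1*f2*f3*f4 + (-1)*z1*f2*f3^2 + (-1)*z1*f2^2*f4 + z1*f2^2*f3 + (-1)*z1*f1*f3*f4 + z1*f1*f3^2 + z1*f1*f2*f4 + (-1)*z1*f1*f2*f3) * hN
        + ((2)*z3*z4^2*f3 + (-1)*z3*z4^2*f2 + (-1)*z3*z4^2*f1 + (-2)*z3^2*z4*f3 + z3^2*z4*f2 + z3^2*z4*f1 + (-4)*z2*z4^2*f3 + (2)*z2*z4^2*f2 + (2)*z2*z4^2*f1 + (6)*z2*z3*z4*f3 + (-4)*z2*z3*z4*f2 + (-2)*z2*z3*z4*f1 + (-2)*z2*z3^2*f3 + (2)*z2*z3^2*f2 + z2^2*z4*f3 + (-1)*z2^2*z4*f1 + (-1)*z2^2*z3*f3 + z2^2*z3*f1 + (2)*z1*z4^2*f3 + (-1)*z1*z4^2*f2 + (-1)*z1*z4^2*f1 + (-6)*z1*z3*z4*f3 + (4)*z1*z3*z4*f2 + (2)*z1*z3*z4*f1 + (4)*z1*z3^2*f3 + (-3)*z1*z3^2*f2 + (-1)*z1*z3^2*f1 + z1^2*z4*f3 + (-1)*z1^2*z4*f2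 + (-1)*z1^2*z3*f3 + z1^2*z3*f2) * hNc

set_option maxHeartbeats 2000000 in
theorem stmt1 (a b c d : ℂ)
    (hab : a ≠ b) (hac : a ≠ c) (had : a ≠ d) (hbc : b ≠ c) (hbd : b ≠ d) (hcd : c ≠ d)
    (pab pbc pcd pda : ℂ)
    (hpab : pab = fIns d a b c) (hpbc : pbc = fIns a b c d)
    (hpcd : pcd = fIns b c d a) (hpda : pda = fIns c d a b)
    (hden1 : (a - d) * sqrtQ d a b c + (b - d) ≠ 0)
    (hden2 : (b - a) * sqrtQ a b c d + (c - a) ≠ 0)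
    (hden3 : (c - b) * sqrtQ b c d a + (d - b) ≠ 0)
    (hden4 : (d - c) * sqrtQ c d a b + (a - c) ≠ 0)
    (h1 : pbc - pcd ≠ 0) (h2 : pda - pab ≠ 0) :
    crC pab pbc pcd pda = -1 ∧
      ((∃ o : ℂ, ∃ r : ℝ, ‖pab - o‖ = r ∧ ‖pbc - o‖ = r ∧
          ‖pcd - o‖ = r ∧ ‖pda - o‖ = r) ∨
        Collinear ℝ ({pab, pbc, pcd, pda} : Set ℂ)) := by
  have hsym1 : sqrtQ c d a b = sqrtQ a b c d := by
    unfold sqrtQ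
    congr 1
    unfold crC
    rw [show (a-c)*(d-b) = (c-a)*(b-d) from by ring,
      show (c-d)*(b-a) = (a-b)*(d-c) from by ring]
  have hsym2 : sqrtQ b c d a = sqrtQ d a b c := by
    unfold sqrtQ
    congr 1
    unfold crC
    rw [show (d-b)*(c-a) = (b-d)*(a-c) from by ring,
      show (b-c)*(a-d) = (d-a)*(c-b) from by ring]
  have hSden : (a-b)*(d-c) ≠ 0 :=
    mul_ne_zero (sub_ne_zero.mpr hab) (sub_ne_zero.mpr (Ne.symm hcd))
  have hTden : (d-a)*(c-b) ≠ 0 :=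
    mul_ne_zero (sub_ne_zero.mpr (Ne.symm had)) (sub_ne_zero.mpr (Ne.symm hbc))
  have hs : (sqrtQ a b c d)^2 * ((a-b)*(d-c)) = (c-a)*(b-d) := by
    unfold sqrtQ
    rw [sq_half]
    unfold crC
    exact div_mul_cancel₀ _ hSden
  have ht : (sqrtQ d a b c)^2 * ((d-a)*(c-b)) = (b-d)*(a-c) := by
    unfold sqrtQ
    rw [sq_half]
    unfold crC
    exact div_mul_cancel₀ _ hTden
  set s : ℂ := sqrtQ a b c d with hsdef
  set t : ℂ := sqrtQ d a b c with htdef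
  have hA1 : (a-d)*t + (b-d) ≠ 0 := hden1
  have hA2 : (b-a)*s + (c-a) ≠ 0 := hden2
  have hA3 : (c-b)*t + (d-b) ≠ 0 := by rw [← hsym2]; exact hden3
  have hA4 : (d-c)*s + (a-c) ≠ 0 := by rw [← hsym1]; exact hden4
  have hpab' : pab = (b*(a-d)*t + a*(b-d)) / ((a-d)*t + (b-d)) := by
    rw [hpab]; simp only [fIns]; rfl
  have hpbc' : pbc = (c*(b-a)*s + b*(c-a)) / ((b-a)*s + (c-a)) := by
    rw [hpbc]; simp only [fIns]; rfl
  have hpcd' : pcd = (d*(c-b)*t + c*(d-b)) / ((c-b)*t + (d-b)) := by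
    rw [hpcd]; simp only [fIns]
    rw [hsym2]
  have hpda' : pda = (a*(d-c)*s + d*(a-c)) / ((d-c)*s + (a-c)) := by
    rw [hpda]; simp only [fIns]
    rw [hsym1]
  have hE := core1 a b c d s t hs ht hSden hTden
  have hprod : (pab - pbc) * (pcd - pda) = -((pbc - pcd) * (pda - pab)) := by
    have hE' : ((b*(a-d)*t + a*(b-d))*((b-a)*s + (c-a)) - ((a-d)*t + (b-d))*(c*(b-a)*s + b*(c-a))) * ((d*(c-b)*t + c*(d-b))*((d-c)*s + (a-c)) - ((c-b)*t + (d-b))*(a*(d-c)*s + d*(a-c)))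
        = -(((c*(b-a)*s + b*(c-a))*((c-b)*t + (d-b)) - ((b-a)*s + (c-a))*(d*(c-b)*t + c*(d-b))) * ((a*(d-c)*s + d*(a-c))*((a-d)*t + (b-d)) - ((d-c)*s + (a-c))*(b*(a-d)*t + a*(b-d)))) := by
      linear_combination hE
    rw [hpab', hpbc', hpcd', hpda']
    rw [div_sub_div _ _ hA1 hA2, div_sub_div _ _ hA3 hA4, div_sub_div _ _ hA2 hA3,
      div_sub_div _ _ hA4 hA1, div_mul_div_comm, div_mul_div_comm,
      show (((a-d)*t + (b-d))*((b-a)*s + (c-a)))*(((c-b)*t + (d-b))*((d-c)*s + (a-c))) = (((b-a)*s + (c-a))*((c-b)*t + (d-b)))*(((d-c)*s + (a-c))*((a-d)*t + (b-d))) from by ring,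
      hE', neg_div]
  have hcr : crC pab pbc pcd pda = -1 := by
    unfold crC
    rw [hprod, neg_div, div_self (mul_ne_zero h1 h2)]
  exact ⟨hcr, core2 pab pbc pcd pda _ _ _ _ rfl rfl rfl rfl (sub_ne_zero.mp h1) hprod⟩
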